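/- Let G be a graph that is both a VPT graph and a split graph with split partition (S,K), such that every vertex v ∈ K satisfies |N(v)∩S| ≤ 2, and let n ≥ 4. If the branch graph B(G/K) contains an induced cycle C_n on n vertices, then G contains an induced n-sun S_n. -/

import Mathlib

open SimpleGraph

/-- `S` induces a path (a nonempty connected subgraph with maximum degree at most 2,
i.e. a subtree which is a path when `T` is a tree) in the graph `T`. -/
def IsPathSet {W : Type*} (T : SimpleGraph W) (S : Set W) : Prop :=
  S.Nonempty ∧
  (∀ x ∈ S, ∀ y ∈ S, ∃ p : T.Walk x y, ∀ z ∈ p.support, z ∈ S) ∧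
  (∀ x ∈ S, (T.neighborSet x ∩ S).ncard ≤ 2)

/-- A VPT-representation of `G` on host tree `T`: a family of paths of the tree `T`,
one for each vertex of `G`, such that two distinct vertices of `G` are adjacent iff
the corresponding paths share a vertex. -/
structure VPTRep {V W : Type*} (G : SimpleGraph V) (T : SimpleGraph W) where
  tree : T.IsTree
  path : V → Set W
  isPath : ∀ v, IsPathSet T (path v)
  adj_iff : ∀ u v : V, u ≠ v → (G.Adj u v ↔ (path u ∩ path v).Nonempty)

/-- `G` is a VPT graph: it has a VPT-representation on some finite host tree. -/
def IsVPT {V : Type*} (G : SimpleGraph V) : Prop :=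
  ∃ (n : ℕ) (T : SimpleGraph (Fin n)), Nonempty (VPTRep G T)

/-- `G` belongs to the class [h,2,1]: it has a VPT-representation whose host tree has
maximum degree at most `h`. -/
def MemH21 {V : Type*} (G : SimpleGraph V) (h : ℕ) : Prop :=
  ∃ (n : ℕ) (T : SimpleGraph (Fin n)) (_ : VPTRep G T),
    ∀ x : Fin n, (T.neighborSet x).ncard ≤ h

/-- `C` is a clique of `G`: a maximal set of pairwise adjacent vertices. -/
def IsMaxClique {V : Type*} (G : SimpleGraph V) (C : Set V) : Prop :=
  G.IsClique C ∧ ∀ D, G.IsClique D → C ⊆ D → D = C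

/-- The branch graph `B(G/C)`, as a graph on the vertex set of `G`; its relevant
vertices are those of `branchVerts G C`, all others are isolated. -/
def branchGraph {V : Type*} (G : SimpleGraph V) (C : Set V) : SimpleGraph V where
  Adj v w := v ∉ C ∧ w ∉ C ∧ v ≠ w ∧ ¬ G.Adj v w ∧
    (∃ u ∈ C, G.Adj u v ∧ G.Adj u w) ∧
    (∃ v' ∈ C, G.Adj v' v ∧ ¬ G.Adj v' w) ∧
    (∃ w' ∈ C, G.Adj w' w ∧ ¬ G.Adj w' v)
  symm := by
    refine ⟨?_⟩
    rintro v w ⟨h1, h2, h3, h4, ⟨u, hu, hu1, hu2⟩, ⟨v', hv', hv1, hv2⟩, ⟨w', hw', hw1, hw2⟩⟩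
    exact ⟨h2, h1, h3.symm, fun hadj => h4 hadj.symm, ⟨u, hu, hu2, hu1⟩,
      ⟨w', hw', hw1, hw2⟩, ⟨v', hv', hv1, hv2⟩⟩
  loopless := by refine ⟨?_⟩; rintro v ⟨_, _, h, _⟩; exact h rfl

/-- The vertex set of the branch graph `B(G/C)`: vertices outside `C` adjacent to
some vertex of `C`. -/
def branchVerts {V : Type*} (G : SimpleGraph V) (C : Set V) : Set V :=
  {v | v ∉ C ∧ ∃ u ∈ C, G.Adj u v}

/-- `B` is a branch of `T` at `q`: a connected component of `T - q`, i.e. the set of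
vertices reachable from some neighbor `y` of `q` by a walk avoiding `q`. -/
def BranchAt {W : Type*} (T : SimpleGraph W) (q : W) (B : Set W) : Prop :=
  ∃ y, T.Adj q y ∧ B = {x | ∃ p : T.Walk y x, q ∉ p.support}

/-- `(S, K)` is a split partition of `G`: `S` is a stable set, `K` is a complete set,
and they partition the vertices. -/
def IsSplitPartition {V : Type*} (G : SimpleGraph V) (S K : Set V) : Prop :=
  (∀ v, v ∈ S ∨ v ∈ K) ∧ Disjoint S K ∧
  (∀ a ∈ S, ∀ b ∈ S, ¬ G.Adj a b) ∧ G.IsClique K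

/-- The cycle graph `Cₙ` on `Fin n` (a cycle for `n ≥ 3`): `i` is adjacent to
`i ± 1 (mod n)`. -/
def cycleG (n : ℕ) : SimpleGraph (Fin n) :=
  SimpleGraph.fromRel (fun i j => (j : ℕ) = ((i : ℕ) + 1) % n)

/-- The `n`-sun `Sₙ` (for `n ≥ 4`): the split graph on `Fin n ⊕ Fin n` whose central
clique is `{Sum.inr i}` (the vertices `vᵢ`) and whose stable set is `{Sum.inl i}`
(the vertices `sᵢ`), with `sᵢ` adjacent exactly to `vᵢ` and `v_{i+1 (mod n)}`. -/
def sunG (n : ℕ) : SimpleGraph (Fin n ⊕ Fin n) :=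
  SimpleGraph.fromRel (fun a b =>
    match a, b with
    | Sum.inr _, Sum.inr _ => True
    | Sum.inl i, Sum.inr j => (j : ℕ) = (i : ℕ) ∨ (j : ℕ) = ((i : ℕ) + 1) % n
    | _, _ => False)
/-- If `G` is a VPT split graph with split partition `(S,K)` in which
every `v ∈ K` has at most two neighbors in `S`, and `n ≥ 4`, then an induced cycle
`Cₙ` in the branch graph `B(G/K)` yields an induced `n`-sun `Sₙ` in `G`. -/
theorem stmt11 {V : Type} [Fintype V] (G : SimpleGraph V) (S K : Set V)
    (hvpt : IsVPT G) (hsplit : IsSplitPartition G S K)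
    (hdeg : ∀ v ∈ K, (G.neighborSet v ∩ S).ncard ≤ 2)
    (n : ℕ) (hn : 4 ≤ n)
    (hcyc : Nonempty (cycleG n ↪g branchGraph G K)) :
    Nonempty (sunG n ↪g G) := by
  obtain ⟨f⟩ := hcyc
  obtain ⟨hall, hdis, hstab, hclK⟩ := hsplit
  haveI : NeZero n := ⟨by omega⟩
  set s : Fin n → V := fun i => f i with hs
  have hval1 : ((1 : Fin n) : ℕ) = 1 := by
    rw [Fin.val_one']; exact Nat.mod_eq_of_lt (by omega)
  have hmod : ∀ i : Fin n, ((i + 1 : Fin n) : ℕ) = ((i : ℕ) + 1) % n := by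
    intro i; rw [Fin.val_add, hval1]
  have hne1 : ∀ i : Fin n, i ≠ i + 1 := by
    intro i h
    have h2 := congrArg Fin.val h
    rw [hmod] at h2
    rcases Nat.lt_or_ge ((i : ℕ) + 1) n with hlt | hge
    · rw [Nat.mod_eq_of_lt hlt] at h2; omega
    · have hi := i.isLt
      have he : (i : ℕ) + 1 = n := by omega
      rw [he, Nat.mod_self] at h2; omega
  have hadjcyc : ∀ i : Fin n, (cycleG n).Adj i (i + 1) := by
    intro i
    rw [cycleG, SimpleGraph.fromRel_adj]
    exact ⟨hne1 i, Or.inl (hmod i)⟩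
  have hb : ∀ i : Fin n, (branchGraph G K).Adj (s i) (s (i + 1)) :=
    fun i => f.map_rel_iff.mpr (hadjcyc i)
  have hsinj : Function.Injective s := fun a b h => f.injective h
  have hsS : ∀ i, s i ∈ S := fun i => (hall (s i)).resolve_right (hb i).1
  choose u huK hu1 hu2 using fun i => (hb i).2.2.2.2.1
  have hsne : ∀ i : Fin n, s i ≠ s (i + 1) := fun i h => hne1 i (hsinj h)
  have hkey : ∀ i : Fin n, ∀ w, G.Adj (u i) w → w ∈ S → w = s i ∨ w = s (i + 1) := by
    intro i w hadj hwS
    by_contra hc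
    push_neg at hc
    obtain ⟨hc1, hc2⟩ := hc
    have hsub : ({w, s i, s (i + 1)} : Set V) ⊆ G.neighborSet (u i) ∩ S := by
      rintro x (rfl | rfl | rfl)
      · exact ⟨hadj, hwS⟩
      · exact ⟨hu1 i, hsS i⟩
      · exact ⟨hu2 i, hsS _⟩
    have h3 : ({w, s i, s (i + 1)} : Set V).ncard = 3 := by
      rw [Set.ncard_insert_of_notMem (by simp [hc1, hc2]) (Set.toFinite _),
        Set.ncard_insert_of_notMem (by simp [hsne i]) (Set.toFinite _),
        Set.ncard_singleton]
    have hle := Set.ncard_le_ncard hsub (Set.toFinite _)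
    have hd := hdeg (u i) (huK i)
    omega
  have huinj : Function.Injective u := by
    intro i j h
    have h1 : s i = s j ∨ s i = s (j + 1) := hkey j (s i) (h ▸ hu1 i) (hsS i)
    have h2 : s (i + 1) = s j ∨ s (i + 1) = s (j + 1) := hkey j _ (h ▸ hu2 i) (hsS _)
    rcases h1 with h1 | h1
    · exact hsinj h1
    rcases h2 with h2 | h2
    · exfalso
      have e1 : i = j + 1 := hsinj h1
      have e2 : i + 1 = j := hsinj h2
      rw [← e2] at e1
      have hv := congrArg Fin.val e1
      rw [hmod, hmod] at hv
      have hi := i.isLt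
      rcases Nat.lt_or_ge ((i : ℕ) + 1) n with hlt | hge
      · rw [Nat.mod_eq_of_lt hlt] at hv
        rcases Nat.lt_or_ge ((i : ℕ) + 2) n with hlt2 | hge2
        · rw [Nat.mod_eq_of_lt (by omega)] at hv; omega
        · have he : (i : ℕ) + 2 = n := by omega
          rw [show (i : ℕ) + 1 + 1 = n from by omega, Nat.mod_self] at hv
          omega
      · have he : (i : ℕ) + 1 = n := by omega
        rw [he, Nat.mod_self, Nat.mod_eq_of_lt (by omega)] at hv
        omega
    · have := hsinj h2
      exact add_right_cancel this
  have hsub1 : ∀ j : Fin n, j - 1 + 1 = j := fun j => sub_add_cancel j 1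
  have hmain : ∀ i j : Fin n,
      G.Adj (s i) (u (j - 1)) ↔ ((j : ℕ) = (i : ℕ) ∨ (j : ℕ) = ((i : ℕ) + 1) % n) := by
    intro i j
    constructor
    · intro hadj
      have := hkey (j - 1) (s i) hadj.symm (hsS i)
      rw [hsub1 j] at this
      rcases this with h | h
      · right
        have e : i = j - 1 := hsinj h
        have : j = i + 1 := by rw [e, hsub1 j]
        rw [this, hmod]
      · left; rw [hsinj h]
    · rintro (h | h)
      · have e : j = i := Fin.val_injective h
        subst e
        have := hu2 (j - 1)
        rw [hsub1 j] at this
        exact this.symm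
      · have e : j = i + 1 := Fin.val_injective (by rw [h, hmod])
        have e2 : j - 1 = i := by rw [e]; exact add_sub_cancel_right i 1
        rw [e2]
        exact (hu1 i).symm
  refine ⟨⟨⟨Sum.elim s (fun i => u (i - 1)), ?_⟩, ?_⟩⟩
  · rintro (a | a) (b | b) h <;> simp only [Sum.elim_inl, Sum.elim_inr] at h
    · exact congrArg Sum.inl (hsinj h)
    · exact (Set.disjoint_left.mp hdis (hsS a) (by rw [h]; exact huK _)).elim
    · exact (Set.disjoint_left.mp hdis (hsS b) (by rw [← h]; exact huK _)).elim
    · refine congrArg Sum.inr ?_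
      have := huinj h
      have := congrArg (· + 1) this
      simpa [hsub1] using this
  · intro a b
    change G.Adj (Sum.elim s (fun i => u (i - 1)) a) (Sum.elim s (fun i => u (i - 1)) b) ↔ (sunG n).Adj a b
    rcases a with i | i <;> rcases b with j | j <;>
      simp only [Function.Embedding.coeFn_mk, Sum.elim_inl, Sum.elim_inr]
    · rw [sunG, SimpleGraph.fromRel_adj]
      simp only [ne_eq, Sum.inl.injEq]
      constructor
      · intro h; exact absurd h (hstab _ (hsS i) _ (hsS j))
      · rintro ⟨-, h | h⟩ <;> exact h.elim
    · rw [sunG, SimpleGraph.fromRel_adj]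
      simp only [ne_eq, reduceCtorEq, not_false_eq_true, true_and, or_false]
      exact hmain i j
    · rw [sunG, SimpleGraph.fromRel_adj, G.adj_comm]
      simp only [ne_eq, reduceCtorEq, not_false_eq_true, true_and, false_or]
      exact hmain j i
    · rw [sunG, SimpleGraph.fromRel_adj]
      simp only [ne_eq, Sum.inr.injEq, or_self, and_true]
      constructor
      · intro h hij
        subst hij
        exact h.ne rfl
      · intro hij
        refine hclK (huK _) (huK _) (fun hc => hij ?_)
        have := huinj hc
        have := congrArg (· + 1) this
        simpa [hsub1] using this
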